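/- Let n be a positive integer and let X and Y be real random variables whose distributions are related by P[−Y ≤ t] = 1 − (P[−X > t])^{1/n} for all t ∈ ℝ. If for some ε > 0 one has E[(max(0,−X))^{n+ε}] < ∞, then E[max(0,−Y)] < ∞. -/

import Mathlib

open MeasureTheory Set

/-- If `P[-Y ≤ t] = 1 - (P[-X > t])^{1/n}` for all `t` (i.e. the loss `-X` is distributed
like the minimum of `n` independent copies of the loss `-Y`), and if
`E[(max(0,-X))^{n+ε}] < ∞` for some `ε > 0`, then `E[max(0,-Y)] < ∞`. -/
theorem integrability_of_higher_moment {Ω Ω' : Type*}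
    [MeasurableSpace Ω] [MeasurableSpace Ω']
    (μ : Measure Ω) (ν : Measure Ω') [IsProbabilityMeasure μ] [IsProbabilityMeasure ν]
    (n : ℕ) (hn : 0 < n) (X : Ω → ℝ) (Y : Ω' → ℝ) (hX : Measurable X) (hY : Measurable Y)
    (hrel : ∀ t : ℝ, (ν {ω | - Y ω ≤ t}).toReal
      = 1 - ((μ {ω | t < - X ω}).toReal) ^ ((n : ℝ)⁻¹))
    (ε : ℝ) (hε : 0 < ε)
    (hint : Integrable (fun ω => (max 0 (- X ω)) ^ ((n : ℝ) + ε)) μ) :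
    Integrable (fun ω => max 0 (- Y ω)) ν := by
  set p : ℝ := (n : ℝ) + ε with hp
  have hnpos : (0 : ℝ) < n := Nat.cast_pos.mpr hn
  have hppos : 0 < p := by positivity
  set C : ℝ := ∫ ω, (max 0 (- X ω)) ^ p ∂μ with hCdef
  have hC0 : 0 ≤ C := integral_nonneg fun ω => Real.rpow_nonneg (le_max_left _ _) _
  -- lintegral form of the moment
  have hlint : ∫⁻ ω, ENNReal.ofReal ((max 0 (- X ω)) ^ p) ∂μ = ENNReal.ofReal C :=
    (ofReal_integral_eq_lintegral_ofReal hint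
      (Filter.Eventually.of_forall fun ω => Real.rpow_nonneg (le_max_left _ _) _)).symm
  -- Markov bound for the tail of -X
  have markov : ∀ t : ℝ, 0 < t → μ {ω | t < - X ω} ≤ ENNReal.ofReal (C / t ^ p) := by
    intro t ht
    have htp : 0 < t ^ p := Real.rpow_pos_of_pos ht p
    have hsub : {ω | t < - X ω} ⊆
        {ω | ENNReal.ofReal (t ^ p) ≤ ENNReal.ofReal ((max 0 (- X ω)) ^ p)} := by
      intro ω hω
      have h1 : t ≤ max 0 (- X ω) := le_max_of_le_right (le_of_lt hω)
      exact ENNReal.ofReal_le_ofReal (Real.rpow_le_rpow ht.le h1 hppos.le)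
    calc μ {ω | t < - X ω}
        ≤ μ {ω | ENNReal.ofReal (t ^ p) ≤ ENNReal.ofReal ((max 0 (- X ω)) ^ p)} :=
          measure_mono hsub
      _ ≤ (∫⁻ ω, ENNReal.ofReal ((max 0 (- X ω)) ^ p) ∂μ) / ENNReal.ofReal (t ^ p) := by
          apply meas_ge_le_lintegral_div
          · exact (ENNReal.measurable_ofReal.comp
              ((measurable_const.max hX.neg).pow_const p)).aemeasurable
          · simpa using htp
          · exact ENNReal.ofReal_ne_top
      _ = ENNReal.ofReal C / ENNReal.ofReal (t ^ p) := by rw [hlint]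
      _ = ENNReal.ofReal (C / t ^ p) := by
          rw [ENNReal.ofReal_div_of_pos htp]
  -- tail of -Y
  have tailY : ∀ t : ℝ, 0 < t →
      ν {ω | t < - Y ω} ≤ ENNReal.ofReal (C ^ ((n : ℝ)⁻¹) / t ^ (p * (n : ℝ)⁻¹)) := by
    intro t ht
    have hmeas : MeasurableSet {ω | - Y ω ≤ t} := by
      exact measurableSet_le hY.neg measurable_const
    have hcompl : {ω | t < - Y ω} = {ω | - Y ω ≤ t}ᶜ := by
      ext ω; simp [not_le]
    have hνfin : ν {ω | t < - Y ω} ≠ ⊤ := (measure_lt_top ν _).ne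
    have htoReal : (ν {ω | t < - Y ω}).toReal = ((μ {ω | t < - X ω}).toReal) ^ ((n : ℝ)⁻¹) := by
      rw [hcompl, measure_compl hmeas (measure_lt_top ν _).ne, measure_univ]
      rw [ENNReal.toReal_sub_of_le (prob_le_one) (by simp), ENNReal.toReal_one, hrel t]
      ring
    have hμX : (μ {ω | t < - X ω}).toReal ≤ C / t ^ p := by
      have := markov t ht
      have h2 := ENNReal.toReal_mono ENNReal.ofReal_ne_top this
      rwa [ENNReal.toReal_ofReal (by positivity)] at h2
    have hstep : (ν {ω | t < - Y ω}).toReal ≤ C ^ ((n : ℝ)⁻¹) / t ^ (p * (n : ℝ)⁻¹) := by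
      rw [htoReal]
      calc ((μ {ω | t < - X ω}).toReal) ^ ((n : ℝ)⁻¹)
          ≤ (C / t ^ p) ^ ((n : ℝ)⁻¹) :=
            Real.rpow_le_rpow ENNReal.toReal_nonneg hμX (by positivity)
        _ = C ^ ((n : ℝ)⁻¹) / t ^ (p * (n : ℝ)⁻¹) := by
            rw [Real.div_rpow hC0 (Real.rpow_nonneg ht.le p), ← Real.rpow_mul ht.le]
    calc ν {ω | t < - Y ω} = ENNReal.ofReal ((ν {ω | t < - Y ω}).toReal) :=
          (ENNReal.ofReal_toReal hνfin).symm
      _ ≤ _ := ENNReal.ofReal_le_ofReal hstep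
  -- now the layer cake
  set f : Ω' → ℝ := fun ω => max 0 (- Y ω) with hf
  have hfmeas : Measurable f := measurable_const.max hY.neg
  refine ⟨hfmeas.aestronglyMeasurable, ?_⟩
  refine (hasFiniteIntegral_iff_ofReal
    (Filter.Eventually.of_forall fun ω => le_max_left _ _)).mpr ?_
  rw [lintegral_eq_lintegral_meas_lt ν
    (Filter.Eventually.of_forall fun ω => le_max_left _ _) hfmeas.aemeasurable]
  have hsets : ∀ t ∈ Ioi (0 : ℝ), ν {a | t < f a} = ν {ω | t < - Y ω} := by
    intro t ht
    congr 1
    ext ω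
    simp only [hf, lt_max_iff, mem_setOf_eq]
    constructor
    · rintro (h | h)
      · exact absurd h (not_lt.mpr (le_of_lt ht))
      · exact h
    · exact Or.inr
  simp only [Pi.zero_apply]
  rw [setLIntegral_congr_fun measurableSet_Ioi
    (fun t ht => hsets t ht)]
  have hsplit : Ioi (0 : ℝ) = Ioc (0 : ℝ) 1 ∪ Ioi 1 := (Ioc_union_Ioi_eq_Ioi zero_le_one).symm
  rw [hsplit, lintegral_union measurableSet_Ioi (Ioc_disjoint_Ioi le_rfl)]
  have part1 : ∫⁻ t in Ioc (0 : ℝ) 1, ν {ω | t < - Y ω} < ⊤ := by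
    calc ∫⁻ t in Ioc (0 : ℝ) 1, ν {ω | t < - Y ω}
        ≤ ∫⁻ _ in Ioc (0 : ℝ) 1, 1 := setLIntegral_mono' measurableSet_Ioc
          (fun t _ => prob_le_one)
      _ = volume (Ioc (0 : ℝ) 1) := by rw [setLIntegral_const, one_mul]
      _ < ⊤ := by simp
  have part2 : ∫⁻ t in Ioi (1 : ℝ), ν {ω | t < - Y ω} < ⊤ := by
    set g : ℝ → ℝ := fun t => C ^ ((n : ℝ)⁻¹) * t ^ (-(p * (n : ℝ)⁻¹)) with hg
    have hq1 : -(p * (n : ℝ)⁻¹) < -1 := by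
      rw [neg_lt_neg_iff, ← div_eq_mul_inv, lt_div_iff₀ hnpos]
      linarith
    have hgint : IntegrableOn g (Ioi (1 : ℝ)) :=
      (integrableOn_Ioi_rpow_of_lt hq1 one_pos).const_mul _
    calc ∫⁻ t in Ioi (1 : ℝ), ν {ω | t < - Y ω}
        ≤ ∫⁻ t in Ioi (1 : ℝ), ENNReal.ofReal (g t) := by
          apply setLIntegral_mono' measurableSet_Ioi
          intro t ht
          have ht0 : (0 : ℝ) < t := lt_trans one_pos ht
          refine (tailY t ht0).trans (ENNReal.ofReal_le_ofReal ?_)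
          show _ ≤ C ^ ((n : ℝ)⁻¹) * t ^ (-(p * (n : ℝ)⁻¹))
          rw [Real.rpow_neg ht0.le, div_eq_mul_inv]
      _ < ⊤ := hgint.lintegral_lt_top
  exact ENNReal.add_lt_top.mpr ⟨part1, part2⟩
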